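/- If R0 = 1 and A1 < 0, then the quadratic f has exactly one positive real root, namely I2 = −A1/A2. -/
import Mathlib


/-- If `R₀ = 1` and `A₁ < 0`, then the quadratic `f` has exactly
one positive real root, namely `I₂ = −A₁/A₂`. -/
theorem stmt2 (A d β b μ0 μ1 : ℝ)
    (hA : 0 < A) (hd : 0 < d) (hβ : 0 < β) (hb : 0 < b)
    (hμ0 : 0 < μ0) (hμ1 : 0 < μ1) (hμ : μ0 < μ1)
    (R0 : ℝ) (hR0 : R0 = β * A / (d * (d + μ1)))
    (A2 A1 A0 : ℝ)
    (hA2 : A2 = (d + μ0) * β)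
    (hA1 : A1 = d ^ 2 + (b * β + μ0) * d + (b * μ1 - A) * β)
    (hA0 : A0 = b * d * (d + μ1) * (1 - R0))
    (f : ℝ → ℝ) (hf : ∀ I, f I = A2 * I ^ 2 + A1 * I + A0)
    (I2 : ℝ) (hI2 : I2 = -A1 / A2)
    (hR0eq : R0 = 1) (hA1neg : A1 < 0) :
    f I2 = 0 ∧ 0 < I2 ∧ ∀ I : ℝ, 0 < I → f I = 0 → I = I2 := by
  have hA2pos : 0 < A2 := by rw [hA2]; positivity
  have hA0z : A0 = 0 := by rw [hA0, hR0eq]; ring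
  have hI2pos : 0 < I2 := by
    rw [hI2]; exact div_pos (by linarith) hA2pos
  refine ⟨?_, hI2pos, ?_⟩
  · rw [hf, hI2, hA0z]; field_simp; ring
  · intro I hI hfI
    rw [hf, hA0z] at hfI
    have : I * (A2 * I + A1) = 0 := by linarith [hfI]
    rcases mul_eq_zero.1 this with h | h
    · exact absurd h hI.ne'
    · rw [hI2]; field_simp; linarith
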